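/- Let H ∈ (0,1), r ≥ 1, and let a₀, …, a_q be real numbers satisfying Σ_{k=0}^q a_k k^i = 0 for every i = 0, 1, …, r−1 (a filter of order r). Then the function n ↦ ρ_H^a(n) = −(1/2) Σ_{k=0}^q Σ_{j=0}^q a_k a_j |n + k − j|^{2H} is O(n^{2H − 2r}) as n → ∞ along the natural numbers. -/

import Mathlib

open Real Asymptotics Filter


lemma iterDeriv_rpow (p A B : ℝ) (hA : 0 < A) (hAB : A < B) (m : ℕ) :
    ∀ y ∈ Set.Icc A B, iteratedDerivWithin m (fun x : ℝ => x ^ p) (Set.Icc A B) y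
      = (∏ i ∈ Finset.range m, (p - i)) * y ^ (p - m) := by
  induction m with
  | zero => intro y hy; simp [iteratedDerivWithin_zero]
  | succ m ih =>
    intro y hy
    have hy0 : (0:ℝ) < y := lt_of_lt_of_le hA hy.1
    rw [iteratedDerivWithin_succ]
    rw [derivWithin_congr ih (ih y hy)]
    have hd : HasDerivAt (fun x : ℝ => (∏ i ∈ Finset.range m, (p - i)) * x ^ (p - m))
        ((∏ i ∈ Finset.range m, (p - i)) * ((p - m) * y ^ (p - m - 1))) y :=
      (Real.hasDerivAt_rpow_const (Or.inl hy0.ne')).const_mul _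
    rw [hd.hasDerivWithinAt.derivWithin ((uniqueDiffOn_Icc hAB) y hy)]
    rw [Finset.prod_range_succ]
    have : p - ((m:ℝ) + 1) = p - (m:ℝ) - 1 := by ring
    push_cast
    rw [this, mul_assoc]

lemma vanish_one {r q : ℕ} {a : ℕ → ℝ}
    (ha : ∀ i : ℕ, i < r → ∑ k ∈ Finset.range (q+1), a k * (k:ℝ) ^ i = 0)
    (x : ℝ) {p : ℕ} (hp : p < r) :
    ∑ j ∈ Finset.range (q+1), a j * (x - (j:ℝ)) ^ p = 0 := by
  have hterm : ∀ j ∈ Finset.range (q+1), a j * (x - (j:ℝ)) ^ p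
      = ∑ l ∈ Finset.range (p+1),
        (x ^ l * (-1) ^ (p - l) * (p.choose l : ℝ)) * (a j * (j:ℝ) ^ (p - l)) := by
    intro j _
    rw [sub_eq_add_neg, add_pow, Finset.mul_sum]
    refine Finset.sum_congr rfl fun l _ => ?_
    rw [neg_pow]
    ring
  rw [Finset.sum_congr rfl hterm, Finset.sum_comm]
  refine Finset.sum_eq_zero fun l hl => ?_
  rw [← Finset.mul_sum, ha (p - l) (lt_of_le_of_lt (Nat.sub_le p l) hp), mul_zero]

lemma vanish_two {r q : ℕ} {a : ℕ → ℝ}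
    (ha : ∀ i : ℕ, i < r → ∑ k ∈ Finset.range (q+1), a k * (k:ℝ) ^ i = 0)
    (x : ℝ) {i : ℕ} (hi : i < 2 * r) :
    ∑ k ∈ Finset.range (q+1), ∑ j ∈ Finset.range (q+1),
      a k * a j * (x + (k:ℝ) - (j:ℝ)) ^ i = 0 := by
  have hterm : ∀ k ∈ Finset.range (q+1), ∀ j ∈ Finset.range (q+1),
      a k * a j * (x + (k:ℝ) - (j:ℝ)) ^ i
      = ∑ m ∈ Finset.range (i+1),
          (a k * (k:ℝ) ^ m) * ((i.choose m : ℝ) * (a j * (x - (j:ℝ)) ^ (i - m))) := by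
    intro k _ j _
    have : x + (k:ℝ) - (j:ℝ) = (k:ℝ) + (x - (j:ℝ)) := by ring
    rw [this, add_pow, Finset.mul_sum]
    refine Finset.sum_congr rfl fun m _ => ?_
    ring
  calc ∑ k ∈ Finset.range (q+1), ∑ j ∈ Finset.range (q+1),
        a k * a j * (x + (k:ℝ) - (j:ℝ)) ^ i
      = ∑ k ∈ Finset.range (q+1), ∑ m ∈ Finset.range (i+1),
          (a k * (k:ℝ) ^ m) * ((i.choose m : ℝ) *
            ∑ j ∈ Finset.range (q+1), a j * (x - (j:ℝ)) ^ (i - m)) := by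
        refine Finset.sum_congr rfl fun k hk => ?_
        rw [Finset.sum_congr rfl (hterm k hk), Finset.sum_comm]
        refine Finset.sum_congr rfl fun m _ => ?_
        rw [Finset.mul_sum, Finset.mul_sum]
    _ = ∑ m ∈ Finset.range (i+1), (∑ k ∈ Finset.range (q+1), a k * (k:ℝ) ^ m) *
          ((i.choose m : ℝ) * ∑ j ∈ Finset.range (q+1), a j * (x - (j:ℝ)) ^ (i - m)) := by
        rw [Finset.sum_comm]
        exact Finset.sum_congr rfl fun m _ => (Finset.sum_mul ..).symm
    _ = 0 := by
        refine Finset.sum_eq_zero fun m hm => ?_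
        rcases lt_or_ge m r with h | h
        · rw [ha m h, zero_mul]
        · rw [vanish_one ha x (show i - m < r by omega), mul_zero, mul_zero]

/-- For a filter `a₀,…,a_q` of order `r ≥ 1` (i.e. `Σ_k a_k k^i = 0` for
`i = 0,…,r-1`), the covariance `ρ_H^a(n) = -(1/2) Σ_k Σ_j a_k a_j |n+k-j|^(2H)`
of the filtered fBm observations is `O(n^(2H-2r))` as `n → ∞`. -/
theorem filtered_fbm_covariance_decay (H : ℝ) (hH : H ∈ Set.Ioo (0:ℝ) 1)
    (r : ℕ) (hr : 1 ≤ r) (q : ℕ) (a : ℕ → ℝ)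
    (ha : ∀ i : ℕ, i < r → ∑ k ∈ Finset.range (q+1), a k * (k:ℝ) ^ i = 0) :
    (fun n : ℕ => -(1/2) * ∑ k ∈ Finset.range (q+1), ∑ j ∈ Finset.range (q+1),
        a k * a j * |(n:ℝ) + k - j| ^ (2*H)) =O[atTop]
      (fun n : ℕ => (n:ℝ) ^ (2*H - 2*r)) := by
  obtain ⟨m, hm⟩ : ∃ m, 2 * r = m + 1 := ⟨2 * r - 1, by omega⟩
  set R := Finset.range (q+1) with hR
  set S := ∑ k ∈ R, |a k| with hS
  set D := |∏ i ∈ Finset.range (2*r), (2*H - (i:ℝ))| with hD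
  set Q := ((2*(q:ℝ)+2)) ^ (2*r) with hQ
  have hQ0 : 0 ≤ Q := by positivity
  have hS0 : 0 ≤ S := Finset.sum_nonneg fun k _ => abs_nonneg _
  have he : 2*H - 2*(r:ℝ) ≤ 0 := by
    have : (1:ℝ) ≤ r := by exact_mod_cast hr
    nlinarith [hH.2]
  rw [isBigO_iff]
  refine ⟨S * S * (D * ((2:ℝ)^(2*r))) * Q, ?_⟩
  filter_upwards [eventually_ge_atTop (2*q+2)] with n hn
  have hn' : (2*(q:ℝ)+2) ≤ (n:ℝ) := by exact_mod_cast hn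
  set nr := (n:ℝ) with hnr
  have hnr0 : (0:ℝ) < nr := by nlinarith
  set A := nr - q - 1 with hA'
  set B := nr + q with hB'
  have hA : (0:ℝ) < A := by simp only [hA']; nlinarith
  have hAB : A < B := by simp only [hA', hB']; nlinarith
  have hA2 : nr/2 ≤ A := by simp only [hA']; nlinarith
  set g : ℝ → ℝ := fun x => x ^ (2*H) with hg'
  set Ic := Set.Icc A B with hIc
  have hg : ContDiffOn ℝ (m+1 : ℕ) g Ic := fun y hy =>
    (Real.contDiffAt_rpow_const_of_ne (ne_of_gt (lt_of_lt_of_le hA hy.1))).contDiffWithinAt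
  set Cb := D * A ^ (2*H - 2*(r:ℝ)) with hCb
  have hCb0 : 0 ≤ Cb := mul_nonneg (abs_nonneg _) (Real.rpow_nonneg hA.le _)
  have hC : ∀ y ∈ Ic, ‖iteratedDerivWithin (m+1) g Ic y‖ ≤ Cb := by
    intro y hy
    rw [← hm, hIc, iterDeriv_rpow (2*H) A B hA hAB (2*r) y hy]
    have hy0 : (0:ℝ) < y := lt_of_lt_of_le hA hy.1
    rw [Real.norm_eq_abs, abs_mul, abs_of_nonneg (Real.rpow_nonneg hy0.le _)]
    push_cast
    exact mul_le_mul_of_nonneg_left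
      (Real.rpow_le_rpow_of_nonpos hA hy.1 (by linarith)) (abs_nonneg _)
  set P : ℝ → ℝ := fun x => taylorWithinEval g m Ic A x with hP'
  -- membership of evaluation points
  have hmem : ∀ k ∈ R, ∀ j ∈ R, (nr + k - j) ∈ Ic := by
    intro k hk j hj
    simp only [hR, Finset.mem_range] at hk hj
    constructor
    · simp only [hA']
      have : (0:ℝ) ≤ k := Nat.cast_nonneg k
      have : (j:ℝ) ≤ q := by exact_mod_cast Nat.lt_succ_iff.mp hj
      linarith
    · simp only [hB']
      have : (k:ℝ) ≤ q := by exact_mod_cast Nat.lt_succ_iff.mp hk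
      have : (0:ℝ) ≤ j := Nat.cast_nonneg j
      linarith
  -- the Taylor polynomial part vanishes
  have hPvanish : ∑ k ∈ R, ∑ j ∈ R, a k * a j * P (nr + k - j) = 0 := by
    have hterm : ∀ k ∈ R, ∀ j ∈ R, a k * a j * P (nr + k - j)
        = ∑ i ∈ Finset.range (m+1),
            (((i.factorial : ℝ))⁻¹ * iteratedDerivWithin i g Ic A)
              * (a k * a j * (((q:ℝ)+1) + k - j) ^ i) := by
      intro k _ j _
      simp only [hP']
      rw [taylor_within_apply, Finset.mul_sum]
      refine Finset.sum_congr rfl fun i _ => ?_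
      rw [smul_eq_mul]
      have : nr + (k:ℝ) - j - A = ((q:ℝ)+1) + k - j := by simp only [hA']; ring
      rw [this]; ring
    calc ∑ k ∈ R, ∑ j ∈ R, a k * a j * P (nr + k - j)
        = ∑ k ∈ R, ∑ i ∈ Finset.range (m+1),
            (((i.factorial : ℝ))⁻¹ * iteratedDerivWithin i g Ic A)
              * ∑ j ∈ R, a k * a j * (((q:ℝ)+1) + k - j) ^ i := by
          refine Finset.sum_congr rfl fun k hk => ?_
          rw [Finset.sum_congr rfl (hterm k hk), Finset.sum_comm]
          exact Finset.sum_congr rfl fun i _ => (Finset.mul_sum ..).symm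
      _ = ∑ i ∈ Finset.range (m+1),
            (((i.factorial : ℝ))⁻¹ * iteratedDerivWithin i g Ic A)
              * ∑ k ∈ R, ∑ j ∈ R, a k * a j * (((q:ℝ)+1) + k - j) ^ i := by
          rw [Finset.sum_comm]
          exact Finset.sum_congr rfl fun i _ => (Finset.mul_sum ..).symm
      _ = 0 := by
          refine Finset.sum_eq_zero fun i hi => ?_
          rw [vanish_two ha ((q:ℝ)+1) (by simp only [Finset.mem_range] at hi; omega), mul_zero]
  -- rewrite the absolute values and subtract the Taylor polynomial
  have hrw : ∑ k ∈ R, ∑ j ∈ R, a k * a j * |nr + k - j| ^ (2*H)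
      = ∑ k ∈ R, ∑ j ∈ R, a k * a j * (g (nr + k - j) - P (nr + k - j)) := by
    rw [show (∑ k ∈ R, ∑ j ∈ R, a k * a j * (g (nr + k - j) - P (nr + k - j)))
        = (∑ k ∈ R, ∑ j ∈ R, a k * a j * g (nr + k - j))
          - ∑ k ∈ R, ∑ j ∈ R, a k * a j * P (nr + k - j) by
      rw [← Finset.sum_sub_distrib]
      refine Finset.sum_congr rfl fun k _ => ?_
      rw [← Finset.sum_sub_distrib]
      exact Finset.sum_congr rfl fun j _ => by ring]
    rw [hPvanish, sub_zero]
    refine Finset.sum_congr rfl fun k hk => Finset.sum_congr rfl fun j hj => ?_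
    rw [abs_of_pos (lt_of_lt_of_le hA (hmem k hk j hj).1)]
  -- bound each term via Taylor's theorem
  have hM : ∀ k ∈ R, ∀ j ∈ R, |a k * a j * (g (nr + k - j) - P (nr + k - j))|
      ≤ |a k| * |a j| * (Cb * Q) := by
    intro k hk j hj
    rw [abs_mul, abs_mul]
    refine mul_le_mul_of_nonneg_left ?_ (mul_nonneg (abs_nonneg _) (abs_nonneg _))
    have htb := taylor_mean_remainder_bound hAB.le hg (hmem k hk j hj) hC
    rw [show ‖g (nr + ↑k - ↑j) - taylorWithinEval g m Ic A (nr + ↑k - ↑j)‖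
      = |g (nr + ↑k - ↑j) - P (nr + ↑k - ↑j)| from rfl] at htb
    refine htb.trans ?_
    have hx1 : (0:ℝ) ≤ nr + k - j - A := by
      have := (hmem k hk j hj).1; linarith
    have hx2 : nr + (k:ℝ) - j - A ≤ 2*(q:ℝ)+2 := by
      simp only [hR, Finset.mem_range] at hk hj
      have hkq : (k:ℝ) ≤ q := by exact_mod_cast Nat.lt_succ_iff.mp hk
      have hj0 : (0:ℝ) ≤ j := Nat.cast_nonneg j
      simp only [hA']; linarith
    calc Cb * (nr + ↑k - ↑j - A) ^ (m+1) / (m.factorial : ℝ)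
        ≤ Cb * (nr + ↑k - ↑j - A) ^ (m+1) := by
          refine div_le_self (mul_nonneg hCb0 (pow_nonneg hx1 _)) ?_
          exact_mod_cast m.factorial_pos
      _ ≤ Cb * Q := by
          refine mul_le_mul_of_nonneg_left ?_ hCb0
          rw [hQ, ← hm]
          exact pow_le_pow_left₀ hx1 hx2 _
  -- sum the bounds
  have habs : ‖-(1/2) * ∑ k ∈ R, ∑ j ∈ R, a k * a j * |nr + k - j| ^ (2*H)‖
      ≤ S * S * (Cb * Q) := by
    rw [hrw, norm_mul, Real.norm_eq_abs, Real.norm_eq_abs]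
    have h12 : |(-(1/2):ℝ)| ≤ 1 := by
      rw [abs_neg, abs_of_nonneg (by norm_num : (0:ℝ) ≤ 1/2)]; norm_num
    calc |(-(1/2):ℝ)| * |∑ k ∈ R, ∑ j ∈ R, a k * a j * (g (nr + k - j) - P (nr + k - j))|
        ≤ 1 * |∑ k ∈ R, ∑ j ∈ R, a k * a j * (g (nr + k - j) - P (nr + k - j))| :=
          mul_le_mul_of_nonneg_right h12 (abs_nonneg _)
      _ = |∑ k ∈ R, ∑ j ∈ R, a k * a j * (g (nr + k - j) - P (nr + k - j))| := one_mul _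
      _ ≤ ∑ k ∈ R, ∑ j ∈ R, |a k * a j * (g (nr + k - j) - P (nr + k - j))| := by
          refine (Finset.abs_sum_le_sum_abs _ _).trans ?_
          exact Finset.sum_le_sum fun k _ => Finset.abs_sum_le_sum_abs _ _
      _ ≤ ∑ k ∈ R, ∑ j ∈ R, |a k| * |a j| * (Cb * Q) := by
          refine Finset.sum_le_sum fun k hk => Finset.sum_le_sum fun j hj => hM k hk j hj
      _ = S * S * (Cb * Q) := by
          rw [hS, Finset.sum_mul_sum, Finset.sum_mul]
          refine Finset.sum_congr rfl fun k _ => ?_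
          rw [Finset.sum_mul]
  -- compare Cb with n ^ (2H - 2r)
  have hcompare : Cb ≤ D * ((2:ℝ)^(2*r) * nr ^ (2*H - 2*(r:ℝ))) := by
    refine mul_le_mul_of_nonneg_left ?_ (abs_nonneg _)
    have h1 : A ^ (2*H - 2*(r:ℝ)) ≤ (nr/2) ^ (2*H - 2*(r:ℝ)) :=
      Real.rpow_le_rpow_of_nonpos (by linarith) hA2 he
    refine h1.trans ?_
    rw [Real.div_rpow hnr0.le (by norm_num), div_eq_mul_inv, ← Real.rpow_neg (by norm_num)]
    rw [mul_comm]
    refine mul_le_mul_of_nonneg_right ?_ (Real.rpow_nonneg hnr0.le _)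
    calc (2:ℝ) ^ (-(2*H - 2*(r:ℝ))) ≤ (2:ℝ) ^ ((2*(r:ℝ)):ℝ) := by
          refine Real.rpow_le_rpow_of_exponent_le one_le_two ?_
          have : 0 < H := hH.1
          linarith
      _ = (2:ℝ) ^ (2*r) := by
          rw [show ((2*(r:ℝ)):ℝ) = ((2*r : ℕ):ℝ) by push_cast; ring, Real.rpow_natCast]
  -- finish
  have hfin : S * S * (Cb * Q) ≤ S * S * (D * ((2:ℝ)^(2*r))) * Q * ‖nr ^ (2*H - 2*(r:ℝ))‖ := by
    rw [Real.norm_eq_abs, abs_of_nonneg (Real.rpow_nonneg hnr0.le _)]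
    calc S * S * (Cb * Q) ≤ S * S * ((D * ((2:ℝ)^(2*r) * nr ^ (2*H - 2*(r:ℝ)))) * Q) := by
          refine mul_le_mul_of_nonneg_left (mul_le_mul_of_nonneg_right hcompare hQ0)
            (mul_nonneg hS0 hS0)
      _ = S * S * (D * ((2:ℝ)^(2*r))) * Q * nr ^ (2*H - 2*(r:ℝ)) := by ring
  calc ‖-(1/2) * ∑ k ∈ R, ∑ j ∈ R, a k * a j * |nr + k - j| ^ (2*H)‖
      ≤ S * S * (Cb * Q) := habs
    _ ≤ S * S * (D * ((2:ℝ)^(2*r))) * Q * ‖nr ^ (2*H - 2*(r:ℝ))‖ := hfin
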